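/- Let G be a finite abelian group of order N, let r ≥ 1 be an integer, and let s be an integer with 2r ≤ s ≤ N − 2r. Let d, d′ ∈ G be such that the 4r elements ℓ·d (1 ≤ ℓ ≤ 2r) and ℓ·d′ (1 ≤ ℓ ≤ 2r) are pairwise distinct. For x ∈ G set P(x) = {x+ℓ·d : 1 ≤ ℓ ≤ 2r}, P′(x) = {x+ℓ·d′ : 1 ≤ ℓ ≤ 2r} and Q(x) = P(x) ∪ P′(x), and define M(S,T) = #{ x ∈ G : |S ∩ P(x)| = r, |S ∩ P′(x)| = r, and S △ T = Q(x) } for s-element subsets S, T of G. Then for every function Z : G → {−1,1}: Σ_{S,T} M(S,T) · Π_{y∈S} Z(y) · Π_{y∈T} Z(y) = C(2r,r)² · C(N−4r, s−2r) · Σ_{x∈G} Π_{y∈Q(x)} Z(y), where the outer sum is over all ordered pairs of s-element subsets S, T of G. -/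

import Mathlib

open Finset
open scoped symmDiff

/-- `P(x) = {x + ℓ·d : 1 ≤ ℓ ≤ 2r}`. -/
def prog {G : Type*} [AddCommGroup G] [DecidableEq G] (r : ℕ) (d x : G) : Finset G :=
  (Finset.Icc 1 (2 * r)).image fun ℓ => x + ℓ • d

lemma prog_eq_image {G : Type*} [AddCommGroup G] [DecidableEq G] (r : ℕ) (d x : G) :
    prog r d x = (prog r d 0).image (x + ·) := by
  simp [prog, Finset.image_image, Function.comp_def]

lemma union3_inter {G : Type*} [DecidableEq G] {a b c A : Finset G}
    (ha : a ⊆ A) (hb : Disjoint b A) (hc : Disjoint c A) :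
    (a ∪ b ∪ c) ∩ A = a := by
  rw [union_inter_distrib_right, union_inter_distrib_right, inter_eq_left.mpr ha,
    disjoint_iff_inter_eq_empty.mp hb, disjoint_iff_inter_eq_empty.mp hc]
  simp

lemma count_aux {G : Type} [Fintype G] [DecidableEq G] (r s : ℕ) (hs1 : 2 * r ≤ s)
    (A B : Finset G) (hA : A.card = 2 * r) (hB : B.card = 2 * r) (hAB : Disjoint A B) :
    ((Finset.univ.powersetCard s).filter fun S : Finset G =>
        (S ∩ A).card = r ∧ (S ∩ B).card = r).card
      = (2 * r).choose r * ((2 * r).choose r * (Fintype.card G - 4 * r).choose (s - 2 * r)) := by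
  have hcardAB : (A ∪ B).card = 4 * r := by
    rw [card_union_of_disjoint hAB, hA, hB]; ring
  have key : ((Finset.univ.powersetCard s).filter fun S : Finset G =>
        (S ∩ A).card = r ∧ (S ∩ B).card = r).card
      = (A.powersetCard r ×ˢ (B.powersetCard r ×ˢ
          ((Finset.univ \ (A ∪ B)).powersetCard (s - 2 * r)))).card := by
    apply Finset.card_nbij' (fun S => (S ∩ A, S ∩ B, S \ (A ∪ B)))
      (fun p => p.1 ∪ p.2.1 ∪ p.2.2)
    · intro S hS
      simp only [mem_coe, mem_filter, mem_powersetCard] at hS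
      obtain ⟨⟨-, hScard⟩, hSA, hSB⟩ := hS
      have hinter : (S ∩ (A ∪ B)).card = 2 * r := by
        rw [inter_union_distrib_left,
          card_union_of_disjoint (hAB.mono inter_subset_right inter_subset_right), hSA, hSB]
        ring
      have hsd : (S \ (A ∪ B)).card + (S ∩ (A ∪ B)).card = S.card :=
        card_sdiff_add_card_inter S (A ∪ B)
      simp only [mem_coe, mem_product, mem_powersetCard]
      refine ⟨⟨inter_subset_right, hSA⟩, ⟨inter_subset_right, hSB⟩,
        sdiff_subset_sdiff (subset_univ S) Subset.rfl, ?_⟩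
      omega
    · rintro ⟨a, b, c⟩ h
      simp only [mem_coe, mem_product, mem_powersetCard] at h
      obtain ⟨⟨haA, ha⟩, ⟨hbB, hb⟩, hcU, hc⟩ := h
      have hcAB : Disjoint c (A ∪ B) := by
        refine disjoint_left.mpr fun y hy hy' => ?_
        have hmem := hcU hy
        rw [mem_sdiff] at hmem
        exact hmem.2 hy'
      have hab : Disjoint a b := hAB.mono haA hbB
      have hca : Disjoint c a := hcAB.mono_right (haA.trans subset_union_left)
      have hcb : Disjoint c b := hcAB.mono_right (hbB.trans subset_union_right)
      simp only [mem_coe, mem_filter, mem_powersetCard]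
      have hcard : (a ∪ b ∪ c).card = s := by
        rw [card_union_of_disjoint (by
            exact disjoint_union_left.mpr ⟨hca.symm, hcb.symm⟩),
          card_union_of_disjoint hab, ha, hb, hc]
        omega
      refine ⟨⟨subset_univ _, hcard⟩, ?_, ?_⟩
      · rw [union3_inter haA (hAB.symm.mono_left hbB) (hcAB.mono_right subset_union_left), ha]
      · have : a ∪ b ∪ c = b ∪ a ∪ c := by rw [union_comm a b]
        rw [this, union3_inter hbB (hAB.mono_left haA) (hcAB.mono_right subset_union_right), hb]
    · intro S hS
      simp only [mem_coe, mem_filter, mem_powersetCard] at hS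
      have : S ∩ A ∪ S ∩ B = S ∩ (A ∪ B) := (inter_union_distrib_left S A B).symm
      dsimp only
      rw [this]
      exact sup_inf_sdiff S (A ∪ B)
    · rintro ⟨a, b, c⟩ h
      simp only [mem_coe, mem_product, mem_powersetCard] at h
      obtain ⟨⟨haA, ha⟩, ⟨hbB, hb⟩, hcU, hc⟩ := h
      have hcAB : Disjoint c (A ∪ B) := by
        refine disjoint_left.mpr fun y hy hy' => ?_
        have hmem := hcU hy
        rw [mem_sdiff] at hmem
        exact hmem.2 hy'
      have h1 : (a ∪ b ∪ c) ∩ A = a :=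
        union3_inter haA (hAB.symm.mono_left hbB) (hcAB.mono_right subset_union_left)
      have h2 : (a ∪ b ∪ c) ∩ B = b := by
        have hcomm : a ∪ b ∪ c = b ∪ a ∪ c := by rw [union_comm a b]
        rw [hcomm]
        exact union3_inter hbB (hAB.mono_left haA) (hcAB.mono_right subset_union_right)
      have h3 : (a ∪ b ∪ c) \ (A ∪ B) = c := by
        rw [union_sdiff_distrib, union_sdiff_distrib,
          sdiff_eq_empty_iff_subset.mpr (haA.trans subset_union_left),
          sdiff_eq_empty_iff_subset.mpr (hbB.trans subset_union_right),
          Finset.sdiff_eq_self_iff_disjoint.mpr hcAB]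
        simp
      simp only [Prod.mk.injEq]
      exact ⟨h1, h2, h3⟩
  rw [key, card_product, card_product, card_powersetCard, card_powersetCard, card_powersetCard,
    hA, hB, card_sdiff_of_subset (subset_univ _), card_univ, hcardAB]

lemma triple_swap {α β γ M : Type*} [AddCommMonoid M] (s : Finset α) (t : Finset β)
    (u : Finset γ) (f : α → β → γ → M) :
    ∑ a ∈ s, ∑ b ∈ t, ∑ c ∈ u, f a b c = ∑ c ∈ u, ∑ a ∈ s, ∑ b ∈ t, f a b c :=
  calc ∑ a ∈ s, ∑ b ∈ t, ∑ c ∈ u, f a b c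
      = ∑ a ∈ s, ∑ c ∈ u, ∑ b ∈ t, f a b c :=
        Finset.sum_congr rfl fun _ _ => Finset.sum_comm
    _ = ∑ c ∈ u, ∑ a ∈ s, ∑ b ∈ t, f a b c := Finset.sum_comm

lemma prodZ {G : Type*} [DecidableEq G] (Z : G → ℝ) (hZ : ∀ x, Z x = 1 ∨ Z x = -1)
    (S T : Finset G) :
    (∏ y ∈ S, Z y) * ∏ y ∈ T, Z y = ∏ y ∈ S ∆ T, Z y := by
  have h1 : (∏ y ∈ S ∪ T, Z y) * ∏ y ∈ S ∩ T, Z y = (∏ y ∈ S, Z y) * ∏ y ∈ T, Z y :=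
    Finset.prod_union_inter
  have h2 : S ∪ T = (S ∆ T) ∪ (S ∩ T) := (symmDiff_sup_inf S T).symm
  have h3 : Disjoint (S ∆ T) (S ∩ T) := disjoint_symmDiff_inf S T
  have h4 : ∀ y, Z y * Z y = 1 := fun y => by rcases hZ y with h | h <;> rw [h] <;> norm_num
  rw [h2, Finset.prod_union h3] at h1
  rw [← h1, mul_assoc, ← Finset.prod_mul_distrib]
  simp [h4]

/-- The matrix–tensor identity: for `M(S,T)` counting `x ∈ G` with
`|S ∩ P(x)| = |S ∩ P'(x)| = r` and `S △ T = Q(x)`, and any `Z : G → {−1,1}`,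
`∑_{S,T} M(S,T) ∏_{y∈S} Z(y) ∏_{y∈T} Z(y)
  = C(2r,r)² C(N-4r, s-2r) ∑_x ∏_{y∈Q(x)} Z(y)`. -/
theorem matrix_tensor_identity
    (G : Type) [AddCommGroup G] [Fintype G] [DecidableEq G]
    (r s : ℕ) (hr : 1 ≤ r) (hs1 : 2 * r ≤ s) (hs2 : s ≤ Fintype.card G - 2 * r)
    (d d' : G)
    (hdist : (prog r d 0 ∪ prog r d' 0).card = 4 * r)
    (Z : G → ℝ) (hZ : ∀ x, Z x = 1 ∨ Z x = -1) :
    ∑ S ∈ (Finset.univ : Finset G).powersetCard s,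
        ∑ T ∈ (Finset.univ : Finset G).powersetCard s,
          ((Finset.univ.filter fun x : G =>
              (S ∩ prog r d x).card = r ∧ (S ∩ prog r d' x).card = r ∧
                S ∆ T = prog r d x ∪ prog r d' x).card : ℝ) *
            (∏ y ∈ S, Z y) * ∏ y ∈ T, Z y =
      (Nat.choose (2 * r) r : ℝ) ^ 2 *
          (Nat.choose (Fintype.card G - 4 * r) (s - 2 * r) : ℝ) *
        ∑ x : G, ∏ y ∈ prog r d x ∪ prog r d' x, Z y := by
  classical
  set N := Fintype.card G with hN
  -- basic cardinality facts
  have hQcard : ∀ x : G, (prog r d x ∪ prog r d' x).card = 4 * r := by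
    intro x
    rw [prog_eq_image r d x, prog_eq_image r d' x, ← image_union,
      card_image_of_injective _ (add_right_injective x), hdist]
  have hPle : ∀ (e : G) (x : G), (prog r e x).card ≤ 2 * r := by
    intro e x
    calc (prog r e x).card ≤ (Finset.Icc 1 (2 * r)).card := card_image_le
      _ = 2 * r := by rw [Nat.card_Icc]; omega
  have hPcard : ∀ x : G, (prog r d x).card = 2 * r ∧ (prog r d' x).card = 2 * r := by
    intro x
    have h1 := hPle d x
    have h2 := hPle d' x
    have h3 : 4 * r ≤ (prog r d x).card + (prog r d' x).card :=
      (hQcard x) ▸ card_union_le _ _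
    omega
  have hPdisj : ∀ x : G, Disjoint (prog r d x) (prog r d' x) := by
    intro x
    rw [← card_union_eq_card_add_card, hQcard x, (hPcard x).1, (hPcard x).2]
    ring
  -- step 1 : expand the counting matrix as a sum over x and push inside
  have step1 : ∑ S ∈ (Finset.univ : Finset G).powersetCard s,
        ∑ T ∈ (Finset.univ : Finset G).powersetCard s,
          ((Finset.univ.filter fun x : G =>
              (S ∩ prog r d x).card = r ∧ (S ∩ prog r d' x).card = r ∧
                S ∆ T = prog r d x ∪ prog r d' x).card : ℝ) *
            (∏ y ∈ S, Z y) * ∏ y ∈ T, Z y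
      = ∑ x : G, ∑ S ∈ (Finset.univ : Finset G).powersetCard s,
          ∑ T ∈ (Finset.univ : Finset G).powersetCard s,
            (if (S ∩ prog r d x).card = r ∧ (S ∩ prog r d' x).card = r ∧
                S ∆ T = prog r d x ∪ prog r d' x
              then (∏ y ∈ S, Z y) * ∏ y ∈ T, Z y else 0) := by
    have : ∀ S T : Finset G,
        ((Finset.univ.filter fun x : G =>
            (S ∩ prog r d x).card = r ∧ (S ∩ prog r d' x).card = r ∧
              S ∆ T = prog r d x ∪ prog r d' x).card : ℝ) *
          (∏ y ∈ S, Z y) * ∏ y ∈ T, Z y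
        = ∑ x : G, (if (S ∩ prog r d x).card = r ∧ (S ∩ prog r d' x).card = r ∧
              S ∆ T = prog r d x ∪ prog r d' x
            then (∏ y ∈ S, Z y) * ∏ y ∈ T, Z y else 0) := by
      intro S T
      rw [← Finset.sum_boole, Finset.sum_mul, Finset.sum_mul]
      refine Finset.sum_congr rfl fun x _ => ?_
      split_ifs <;> ring
    simp_rw [this]
    exact triple_swap _ _ _ _
  rw [step1]
  -- step 2 : evaluate the inner double sum for each fixed x
  have key : ∀ x : G, ∑ S ∈ (Finset.univ : Finset G).powersetCard s,
        ∑ T ∈ (Finset.univ : Finset G).powersetCard s,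
          (if (S ∩ prog r d x).card = r ∧ (S ∩ prog r d' x).card = r ∧
              S ∆ T = prog r d x ∪ prog r d' x
            then (∏ y ∈ S, Z y) * ∏ y ∈ T, Z y else 0)
      = ((2 * r).choose r * ((2 * r).choose r * (N - 4 * r).choose (s - 2 * r)) : ℕ) *
          ∏ y ∈ prog r d x ∪ prog r d' x, Z y := by
    intro x
    set A := prog r d x with hA
    set B := prog r d' x with hB
    set Q := A ∪ B with hQ
    have step2 : ∀ S ∈ (Finset.univ : Finset G).powersetCard s,
        ∑ T ∈ (Finset.univ : Finset G).powersetCard s,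
          (if (S ∩ A).card = r ∧ (S ∩ B).card = r ∧ S ∆ T = Q
            then (∏ y ∈ S, Z y) * ∏ y ∈ T, Z y else 0)
        = if (S ∩ A).card = r ∧ (S ∩ B).card = r then ∏ y ∈ Q, Z y else 0 := by
      intro S hS
      have hScard : S.card = s := (mem_powersetCard.mp hS).2
      by_cases hc : (S ∩ A).card = r ∧ (S ∩ B).card = r
      · have hSQ : (S ∩ Q).card = 2 * r := by
          rw [hQ, inter_union_distrib_left,
            card_union_of_disjoint ((hPdisj x).mono inter_subset_right inter_subset_right),
            hc.1, hc.2]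
          ring
        have hT0card : (S ∆ Q).card = s := by
          have he : S ∆ Q = (S ∪ Q) \ (S ∩ Q) := by
            rw [symmDiff_eq_sup_sdiff_inf]; rfl
          have hsub : S ∩ Q ⊆ S ∪ Q := inter_subset_union
          have hcui : (S ∪ Q).card + (S ∩ Q).card = S.card + Q.card :=
            card_union_add_card_inter S Q
          rw [he, card_sdiff_of_subset hsub]
          have hq4 : Q.card = 4 * r := hQcard x
          omega
        have hT0 : S ∆ Q ∈ (Finset.univ : Finset G).powersetCard s :=
          mem_powersetCard.mpr ⟨subset_univ _, hT0card⟩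
        rw [Finset.sum_eq_single_of_mem (S ∆ Q) hT0 ?_, if_pos hc]
        · rw [if_pos ⟨hc.1, hc.2, symmDiff_symmDiff_cancel_left S Q⟩,
            prodZ Z hZ, symmDiff_symmDiff_cancel_left]
        · rintro T hT hne
          rw [if_neg]
          rintro ⟨-, -, hQe⟩
          exact hne (by rw [← symmDiff_symmDiff_cancel_left S T, hQe])
      · rw [if_neg hc]
        refine Finset.sum_eq_zero fun T hT => ?_
        rw [if_neg]
        rintro ⟨h1, h2, -⟩
        exact hc ⟨h1, h2⟩
    rw [Finset.sum_congr rfl step2, ← Finset.sum_filter, Finset.sum_const,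
      count_aux r s hs1 A B (hPcard x).1 (hPcard x).2 (hPdisj x), nsmul_eq_mul]
  rw [Finset.sum_congr rfl fun x _ => key x, ← Finset.mul_sum]
  push_cast
  ring
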